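/- Let s, t ≥ 2 and z ≥ 1 be natural numbers with 2z ≤ t·s − 2t + 1, and set θ' = t·(2s−1). Define the finite sets of naturals P_CA = {i + t·j : 0 ≤ i ≤ t−1, 0 ≤ j ≤ s−1}, P_CB = {t·(s−1−k) + θ'·l : 0 ≤ k ≤ s−1, 0 ≤ l ≤ t−1}, P_SA = {t·s + u : 0 ≤ u ≤ z−1}, and P_SB = {t·s + v : 0 ≤ v ≤ z−1}. Then for every 0 ≤ i ≤ t−1 and 0 ≤ l ≤ t−1, the important power i + t·(s−1) + θ'·l belongs to none of the sumsets P_SA + P_CB, P_SA + P_SB, and P_SB + P_CA. -/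
import Mathlib


open Pointwise

/-- PolyDot-CMPC privacy conditions C1–C3 in the branch
z ≤ ts−t and 2z ≤ ts−2t+1 (polynomials F_{A_2} and F_{B_3}). -/
theorem polydot_conditions_small_z (s t z : ℕ) (hs : 2 ≤ s) (ht : 2 ≤ t)
    (hz : 1 ≤ z) (hzb : 2 * z ≤ t * s - 2 * t + 1) :
    ∀ i l, i < t → l < t →
      i + t * (s - 1) + (t * (2 * s - 1)) * l ∉
        ({n : ℕ | ∃ u, u < z ∧ n = t * s + u} +
         {n : ℕ | ∃ k l', k < s ∧ l' < t ∧ n = t * (s - 1 - k) + (t * (2 * s - 1)) * l'}) ∧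
      i + t * (s - 1) + (t * (2 * s - 1)) * l ∉
        ({n : ℕ | ∃ u, u < z ∧ n = t * s + u} +
         {n : ℕ | ∃ v, v < z ∧ n = t * s + v}) ∧
      i + t * (s - 1) + (t * (2 * s - 1)) * l ∉
        ({n : ℕ | ∃ v, v < z ∧ n = t * s + v} +
         {n : ℕ | ∃ i' j, i' < t ∧ j < s ∧ n = i' + t * j}) := by
  obtain ⟨s', rfl⟩ : ∃ s', s = s' + 2 := ⟨s - 2, by omega⟩
  have e1 : t * (s' + 2) = t * s' + 2 * t := by ring
  have e2 : t * (s' + 2 - 1) = t * s' + t := by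
    rw [show s' + 2 - 1 = s' + 1 from rfl]; ring
  have e3 : t * (2 * (s' + 2) - 1) = 2 * (t * s') + 3 * t := by
    rw [show 2 * (s' + 2) - 1 = 2 * s' + 3 by omega]; ring
  have hB : 2 * z ≤ t * s' + 1 := by omega
  intro i l hi hl
  refine ⟨?_, ?_, ?_⟩
  · rintro ⟨x, ⟨u, hu, rfl⟩, y, ⟨k, l', hk, hl', rfl⟩, hEq⟩
    have hm : t * (s' + 2 - 1 - k) ≤ t * s' + t := by
      calc t * (s' + 2 - 1 - k) ≤ t * (s' + 1) := Nat.mul_le_mul_left _ (by omega)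
        _ = t * s' + t := by ring
    beta_reduce at hEq
    rw [e1, e2, e3] at hEq
    rcases le_or_gt l l' with h | h
    · have hX : (2 * (t * s') + 3 * t) * l ≤ (2 * (t * s') + 3 * t) * l' :=
        Nat.mul_le_mul_left _ h
      omega
    · have hX : (2 * (t * s') + 3 * t) * l' + (2 * (t * s') + 3 * t)
          ≤ (2 * (t * s') + 3 * t) * l := by
        calc (2 * (t * s') + 3 * t) * l' + (2 * (t * s') + 3 * t)
            = (2 * (t * s') + 3 * t) * (l' + 1) := by ring
          _ ≤ (2 * (t * s') + 3 * t) * l := Nat.mul_le_mul_left _ h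
      omega
  · rintro ⟨x, ⟨u, hu, rfl⟩, y, ⟨v, hv, rfl⟩, hEq⟩
    beta_reduce at hEq
    rw [e1, e2, e3] at hEq
    match l with
    | 0 => omega
    | 1 => omega
    | (l + 2) =>
      have hX : (2 * (t * s') + 3 * t) * 2 ≤ (2 * (t * s') + 3 * t) * (l + 2) :=
        Nat.mul_le_mul_left _ (by omega)
      omega
  · rintro ⟨x, ⟨v, hv, rfl⟩, y, ⟨i', j, hi', hj, rfl⟩, hEq⟩
    have hn : t * j ≤ t * s' + t := by
      calc t * j ≤ t * (s' + 1) := Nat.mul_le_mul_left _ (by omega)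
        _ = t * s' + t := by ring
    beta_reduce at hEq
    rw [e1, e2, e3] at hEq
    match l with
    | 0 => omega
    | 1 => omega
    | (l + 2) =>
      have hX : (2 * (t * s') + 3 * t) * 2 ≤ (2 * (t * s') + 3 * t) * (l + 2) :=
        Nat.mul_le_mul_left _ (by omega)
      omega
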